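/- For every measurable function f : ℝ^k → ℂ, every η > 1 with κ_η(f) < ∞, and every a, b ∈ ℝ^k and c ∈ ℝ, the function W((a,b),c)f satisfies κ_η(W((a,b),c)f) ≤ 3^η (1 + ‖a‖² + ‖b‖²)^{η/2} κ_η(f). -/

import Mathlib

open scoped RealInnerProductSpace
open MeasureTheory
open scoped ENNReal Classical

/-- ℝ^k as a Euclidean space. -/
abbrev E (k : ℕ) := EuclideanSpace ℝ (Fin k)

/-- `e(t) = exp(2πit)`. -/
noncomputable def e (t : ℝ) : ℂ := Complex.exp (2 * Real.pi * Complex.I * t)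

/-- The Schrödinger representation:
`[W((a,b),c)f](w) = e(c − ½a·b + a·w) f(w − b)`. -/
noncomputable def W {k : ℕ} (g : (E k × E k) × ℝ) (f : E k → ℂ) : E k → ℂ :=
  fun w => e (g.2 - (1 / 2) * ⟪g.1.1, g.1.2⟫ + ⟪g.1.1, w⟫) * f (w - g.1.2)

/-- `f_φ := R(k_φ)f`: equal to `f` when `φ ≡ 0 (mod 2π)`, to `w ↦ f(−w)` when
`φ ≡ π (mod 2π)`, and given by the oscillatory integral otherwise. -/
noncomputable def fphi {k : ℕ} (f : E k → ℂ) (φ : ℝ) : E k → ℂ :=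
  fun w =>
    if ∃ m : ℤ, φ = 2 * Real.pi * m then f w
    else if ∃ m : ℤ, φ = Real.pi + 2 * Real.pi * m then f (-w)
    else ((|Real.sin φ| ^ (-(k : ℝ) / 2) : ℝ) : ℂ) *
      ∫ v : E k,
        e (((1 / 2) * (‖w‖ ^ 2 + ‖v‖ ^ 2) * Real.cos φ - ⟪w, v⟫) / Real.sin φ) * f v

/-- `κ_η(f) = sup_{w,φ} (1+‖w‖²)^{η/2} |f_φ(w)|` (valued in `ℝ≥0∞`). -/
noncomputable def kappa {k : ℕ} (η : ℝ) (f : E k → ℂ) : ℝ≥0∞ :=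
  ⨆ (w : E k) (φ : ℝ),
    ENNReal.ofReal ((1 + ‖w‖ ^ 2) ^ (η / 2) * ‖fphi f φ w‖)

lemma e_add (x y : ℝ) : e (x + y) = e x * e y := by
  simp only [e]; rw [← Complex.exp_add]; push_cast; ring_nf

lemma abs_e (t : ℝ) : ‖e t‖ = 1 := by
  have h : (2*Real.pi*Complex.I*(t:ℂ)) = ((2*Real.pi*t : ℝ) : ℂ) * Complex.I := by push_cast; ring
  simp only [e, h]; exact Complex.norm_exp_ofReal_mul_I _

lemma sin_ne {φ : ℝ} (h1 : ¬ ∃ m : ℤ, φ = 2 * Real.pi * m)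
    (h2 : ¬ ∃ m : ℤ, φ = Real.pi + 2 * Real.pi * m) : Real.sin φ ≠ 0 := by
  intro hs
  rw [Real.sin_eq_zero_iff] at hs
  obtain ⟨n, hn⟩ := hs
  rcases Int.even_or_odd n with ⟨m, hm⟩ | ⟨m, hm⟩
  · exact h1 ⟨m, by subst hm; push_cast at hn ⊢; linarith⟩
  · exact h2 ⟨m, by subst hm; push_cast at hn ⊢; linarith⟩

/-- Metaplectic covariance of the Schrödinger representation (in absolute value):
`|(W((a,b),c)f)_φ(w)| = |f_φ(w')|` for a translate `w'` with `‖w − w'‖ ≤ ‖a‖ + ‖b‖`. -/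
lemma key {k : ℕ} (f : E k → ℂ) (a b : E k) (c : ℝ) (φ : ℝ) (w : E k) :
    ∃ w' : E k, ‖fphi (W ((a,b),c) f) φ w‖ = ‖fphi f φ w'‖ ∧
      ‖w - w'‖ ≤ ‖a‖ + ‖b‖ := by
  by_cases h1 : ∃ m : ℤ, φ = 2 * Real.pi * m
  · refine ⟨w - b, ?_, ?_⟩
    · simp only [fphi, if_pos h1, W]
      rw [norm_mul, abs_e, one_mul]
    · have : w - (w - b) = b := by abel
      rw [this]
      have := norm_nonneg a; linarith
  by_cases h2 : ∃ m : ℤ, φ = Real.pi + 2 * Real.pi * m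
  · refine ⟨w + b, ?_, ?_⟩
    · simp only [fphi, if_neg h1, if_pos h2, W]
      rw [norm_mul, abs_e, one_mul]
      have : -w - b = -(w + b) := by abel
      rw [this]
    · have : w - (w + b) = -b := by abel
      rw [this, norm_neg]
      have := norm_nonneg a; linarith
  · have hs : Real.sin φ ≠ 0 := sin_ne h1 h2
    set w' : E k := w - (Real.cos φ • b + Real.sin φ • a) with hw'
    refine ⟨w', ?_, ?_⟩
    · set C : ℝ := ((1/2)*((‖w‖:ℝ)^2 - ‖w'‖^2 + ‖b‖^2) * Real.cos φ - ⟪w,b⟫)/Real.sin φ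
        + c + (1/2)*⟪a,b⟫ with hC
      set G : E k → ℂ := fun v =>
        e (((1 / 2) * (‖w‖ ^ 2 + ‖v‖ ^ 2) * Real.cos φ - ⟪w, v⟫) / Real.sin φ) *
          (W ((a,b),c) f v) with hG
      have hpt : ∀ u : E k, G (u + b) =
          e C * (e (((1 / 2) * (‖w'‖ ^ 2 + ‖u‖ ^ 2) * Real.cos φ - ⟪w', u⟫) / Real.sin φ) * f u) := by
        intro u
        simp only [hG, W, add_sub_cancel_right]
        rw [← mul_assoc, ← e_add, ← mul_assoc, ← e_add]
        congr 2
        have hnorm : ‖u + b‖^2 = ‖u‖^2 + 2*⟪u,b⟫ + ‖b‖^2 := norm_add_sq_real u b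
        have hwu : ⟪w', u⟫ = ⟪w,u⟫ - (Real.cos φ * ⟪b,u⟫ + Real.sin φ * ⟪a,u⟫) := by
          rw [hw', inner_sub_left, inner_add_left, real_inner_smul_left, real_inner_smul_left]
        rw [hC, hnorm, hwu, inner_add_right, inner_add_right, real_inner_comm b u]
        field_simp
        ring
      have hCV : (∫ v : E k, G v) = e C *
          ∫ u : E k, e (((1 / 2) * (‖w'‖ ^ 2 + ‖u‖ ^ 2) * Real.cos φ - ⟪w', u⟫) / Real.sin φ) * f u := by
        rw [← MeasureTheory.integral_add_right_eq_self G b]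
        simp only [hpt]
        exact MeasureTheory.integral_const_mul _ _
      simp only [fphi, if_neg h1, if_neg h2]
      rw [← hG, hCV, norm_mul, norm_mul, abs_e, norm_mul]
      ring
    · have : w - w' = Real.cos φ • b + Real.sin φ • a := by rw [hw']; abel
      rw [this]
      have h3 := norm_add_le (Real.cos φ • b) (Real.sin φ • a)
      rw [norm_smul, norm_smul, Real.norm_eq_abs, Real.norm_eq_abs] at h3
      have hc := Real.abs_cos_le_one φ
      have hsn := Real.abs_sin_le_one φ
      have hb := norm_nonneg b
      have ha := norm_nonneg a
      have h4 : |Real.cos φ| * ‖b‖ ≤ ‖b‖ := by nlinarith [abs_nonneg (Real.cos φ)]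
      have h5 : |Real.sin φ| * ‖a‖ ≤ ‖a‖ := by nlinarith [abs_nonneg (Real.sin φ)]
      linarith

lemma weight_bound {k : ℕ} (η : ℝ) (hη : 1 < η) (a b w w' : E k)
    (hd : ‖w - w'‖ ≤ ‖a‖ + ‖b‖) :
    (1 + ‖w‖^2) ^ (η/2) ≤ 3 ^ η * (1 + ‖a‖^2 + ‖b‖^2) ^ (η/2) * (1 + ‖w'‖^2) ^ (η/2) := by
  have ha := norm_nonneg a
  have hb := norm_nonneg b
  have hw' := norm_nonneg w'
  have hw0 : ‖w‖ ≤ ‖w'‖ + (‖a‖ + ‖b‖) := by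
    have h := norm_add_le w' (w - w')
    have h2 : w' + (w - w') = w := by abel
    rw [h2] at h
    linarith
  have h1 : 1 + ‖w‖^2 ≤ 4 * ((1 + ‖a‖^2 + ‖b‖^2) * (1 + ‖w'‖^2)) := by
    have hw2 : ‖w‖^2 ≤ (‖w'‖ + (‖a‖ + ‖b‖))^2 := by nlinarith [norm_nonneg w]
    nlinarith [sq_nonneg (‖w'‖ - ‖a‖), sq_nonneg (‖w'‖ - ‖b‖), sq_nonneg (‖a‖ - ‖b‖),
      mul_nonneg ha hb, mul_nonneg hw' ha, mul_nonneg hw' hb,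
      sq_nonneg (‖a‖*‖w'‖), sq_nonneg (‖b‖*‖w'‖)]
  calc (1 + ‖w‖^2) ^ (η/2)
      ≤ (4 * ((1 + ‖a‖^2 + ‖b‖^2) * (1 + ‖w'‖^2))) ^ (η/2) :=
        Real.rpow_le_rpow (by positivity) h1 (by linarith)
    _ = 4 ^ (η/2) * ((1 + ‖a‖^2 + ‖b‖^2) ^ (η/2) * (1 + ‖w'‖^2) ^ (η/2)) := by
        rw [Real.mul_rpow (by norm_num) (by positivity), Real.mul_rpow (by positivity) (by positivity)]
    _ ≤ 3 ^ η * ((1 + ‖a‖^2 + ‖b‖^2) ^ (η/2) * (1 + ‖w'‖^2) ^ (η/2)) := by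
        have h4 : (4:ℝ) ^ (η/2) ≤ 3 ^ η := by
          have h4' : (4:ℝ) ^ (η/2) = 2 ^ η := by
            rw [show (4:ℝ) = (2:ℝ) ^ (2:ℝ) by
              rw [show ((2:ℝ):ℝ) = ((2:ℕ):ℝ) by norm_num, Real.rpow_natCast]; norm_num,
              ← Real.rpow_mul (by norm_num : (0:ℝ) ≤ 2)]
            congr 1; ring
          rw [h4']
          exact Real.rpow_le_rpow (by norm_num) (by norm_num) (by linarith)
        gcongr
    _ = 3 ^ η * (1 + ‖a‖^2 + ‖b‖^2) ^ (η/2) * (1 + ‖w'‖^2) ^ (η/2) := by ring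

/-- `κ_η(W((a,b),c)f) ≤ 3^η (1 + ‖a‖² + ‖b‖²)^{η/2} κ_η(f)`. -/
theorem kappa_shift {k : ℕ} (hk : 0 < k) (f : E k → ℂ) (hf : Measurable f)
    (η : ℝ) (hη : 1 < η) (hκ : kappa η f < ⊤) (a b : E k) (c : ℝ) :
    kappa η (W ((a, b), c) f) ≤
      ENNReal.ofReal ((3 : ℝ) ^ η * (1 + ‖a‖ ^ 2 + ‖b‖ ^ 2) ^ (η / 2)) * kappa η f := by
  rw [kappa]
  refine iSup_le fun w => iSup_le fun φ => ?_
  obtain ⟨w', habs, hd⟩ := key f a b c φ w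
  have hineq := weight_bound η hη a b w w' hd
  calc ENNReal.ofReal ((1 + ‖w‖ ^ 2) ^ (η / 2) * ‖fphi (W ((a, b), c) f) φ w‖)
      ≤ ENNReal.ofReal ((3 ^ η * (1 + ‖a‖ ^ 2 + ‖b‖ ^ 2) ^ (η / 2)) *
          ((1 + ‖w'‖ ^ 2) ^ (η / 2) * ‖fphi f φ w'‖)) := by
        apply ENNReal.ofReal_le_ofReal
        rw [habs, ← mul_assoc]
        exact mul_le_mul_of_nonneg_right hineq (norm_nonneg _)
    _ = ENNReal.ofReal (3 ^ η * (1 + ‖a‖ ^ 2 + ‖b‖ ^ 2) ^ (η / 2)) *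
          ENNReal.ofReal ((1 + ‖w'‖ ^ 2) ^ (η / 2) * ‖fphi f φ w'‖) :=
        ENNReal.ofReal_mul (by positivity)
    _ ≤ ENNReal.ofReal ((3:ℝ) ^ η * (1 + ‖a‖ ^ 2 + ‖b‖ ^ 2) ^ (η / 2)) * kappa η f := by
        gcongr
        rw [kappa]
        exact le_iSup₂ (f := fun (w : E k) (φ : ℝ) =>
          ENNReal.ofReal ((1 + ‖w‖ ^ 2) ^ (η / 2) * ‖fphi f φ w‖)) w' φ
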